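/- arXiv:1604.05135 — 2 statements merged into one kernel-verified Lean document; each statement's English description precedes it below -/
import Mathlib

section
/- Let T be a finite graph with no isolated vertices, A, B, C finite graphs with graph homomorphisms f : A → B, g : A → C, and D_n the double mapping cylinder of height n. Set X = V(B) − f(V(A)), Y = f(V(A)) (identified with V(A) × {n} in D_n), and Z = V(A) × {n−1}. If η is a cell of the Hom complex Hom(T, D_n) such that η(t) ∩ (X ∪ Y) ≠ ∅ for every vertex t of T, then the image of η is contained in X ∪ Y ∪ Z, i.e., Im(η) ⊆ V(B) ∪ (V(A) × {n−1}). -/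
/-- A graph (possibly with loops) on vertex type `V`. -/
structure LoopGraph (V : Type) where
  Adj : V → V → Prop
  symm : ∀ {x y}, Adj x y → Adj y x

/-- A graph homomorphism. -/
structure GHom {V W : Type} (G : LoopGraph V) (H : LoopGraph W) where
  toFun : V → W
  map_adj : ∀ {x y}, G.Adj x y → H.Adj (toFun x) (toFun y)

/-- The complete graph `K_k` as a `Graph`. -/
def completeG (k : ℕ) : LoopGraph (Fin k) :=
  ⟨fun i j => i ≠ j, fun h => Ne.symm h⟩

/-- `Colorable G k` iff there is a homomorphism `G → K_k`. -/
def LoopGraph.Colorable {V : Type} (G : LoopGraph V) (k : ℕ) : Prop :=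
  Nonempty (GHom G (completeG k))

/-- The chromatic number: least `k` admitting a proper colouring. -/
noncomputable def chromNum {V : Type} (G : LoopGraph V) : ℕ :=
  sInf {k | G.Colorable k}

/-- The categorical product `A × I_n`, where `I_n` is the looped path on `{0, …, n}`. -/
def LoopGraph.prodIn {V : Type} (A : LoopGraph V) (n : ℕ) : LoopGraph (V × Fin (n + 1)) :=
  ⟨fun p q => A.Adj p.1 q.1 ∧ |(p.2 : ℤ) - (q.2 : ℤ)| ≤ 1, by
    rintro ⟨a, i⟩ ⟨b, j⟩ ⟨h1, h2⟩
    exact ⟨A.symm h1, by rwa [abs_sub_comm]⟩⟩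

section Cyl
variable {VA VB VC : Type}

/-- Generating relation for the double mapping cylinder: `f a ∼ (a, n)` and `g a ∼ (a, 0)`. -/
def cylRel (f : VA → VB) (g : VA → VC) (n : ℕ) :
    (VB ⊕ (VA × Fin (n + 1)) ⊕ VC) → (VB ⊕ (VA × Fin (n + 1)) ⊕ VC) → Prop :=
  fun x y =>
    (∃ a, x = Sum.inl (f a) ∧ y = Sum.inr (Sum.inl (a, Fin.last n))) ∨
    (∃ a, x = Sum.inr (Sum.inr (g a)) ∧ y = Sum.inr (Sum.inl (a, 0)))

/-- Vertices of the double mapping cylinder `D_n`. -/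
def CylVert (f : VA → VB) (g : VA → VC) (n : ℕ) : Type :=
  Quot (cylRel f g n)

/-- Adjacency on the disjoint union `B ⊔ (A × I_n) ⊔ C`. -/
def cylBaseAdj (A : LoopGraph VA) (B : LoopGraph VB) (C : LoopGraph VC) (n : ℕ) :
    (VB ⊕ (VA × Fin (n + 1)) ⊕ VC) → (VB ⊕ (VA × Fin (n + 1)) ⊕ VC) → Prop
  | Sum.inl b, Sum.inl b' => B.Adj b b'
  | Sum.inr (Sum.inl p), Sum.inr (Sum.inl q) => (A.prodIn n).Adj p q
  | Sum.inr (Sum.inr c), Sum.inr (Sum.inr c') => C.Adj c c'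
  | _, _ => False

/-- The double mapping cylinder `D_n = B ⊔_f (A × I_n) ⊔_g C` of `f : A → B`, `g : A → C`. -/
def cylGraph (A : LoopGraph VA) (B : LoopGraph VB) (C : LoopGraph VC)
    (f : VA → VB) (g : VA → VC) (n : ℕ) : LoopGraph (CylVert f g n) :=
  ⟨fun x y => ∃ x₀ y₀, Quot.mk _ x₀ = x ∧ Quot.mk _ y₀ = y ∧ cylBaseAdj A B C n x₀ y₀, by
    rintro x y ⟨x₀, y₀, hx, hy, h⟩
    refine ⟨y₀, x₀, hy, hx, ?_⟩
    rcases x₀ with b | p | c <;> rcases y₀ with b' | p' | c' <;>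
      simp only [cylBaseAdj] at h ⊢
    · exact B.symm h
    · exact (A.prodIn n).symm h
    · exact C.symm h⟩

/-- Generating relation for the pushout: `f a ∼ g a`. -/
def pushRel (f : VA → VB) (g : VA → VC) : (VB ⊕ VC) → (VB ⊕ VC) → Prop :=
  fun x y => ∃ a, x = Sum.inl (f a) ∧ y = Sum.inr (g a)

/-- Vertices of the pushout graph. -/
def PushVert (f : VA → VB) (g : VA → VC) : Type := Quot (pushRel f g)

def pushBaseAdj (B : LoopGraph VB) (C : LoopGraph VC) : (VB ⊕ VC) → (VB ⊕ VC) → Prop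
  | Sum.inl b, Sum.inl b' => B.Adj b b'
  | Sum.inr c, Sum.inr c' => C.Adj c c'
  | _, _ => False

/-- The pushout graph `G = B ⊔_A C` of `f : A → B`, `g : A → C`. -/
def pushGraph (B : LoopGraph VB) (C : LoopGraph VC) (f : VA → VB) (g : VA → VC) :
    LoopGraph (PushVert f g) :=
  ⟨fun x y => ∃ x₀ y₀, Quot.mk _ x₀ = x ∧ Quot.mk _ y₀ = y ∧ pushBaseAdj B C x₀ y₀, by
    rintro x y ⟨x₀, y₀, hx, hy, h⟩
    refine ⟨y₀, x₀, hy, hx, ?_⟩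
    rcases x₀ with b | c <;> rcases y₀ with b' | c' <;> simp only [pushBaseAdj] at h ⊢
    · exact B.symm h
    · exact C.symm h⟩

end Cyl

/-- `η` is a multihomomorphism `T → G` (a cell of the Hom complex `Hom(T, G)`). -/
def IsMultiHom {VT VG : Type} (T : LoopGraph VT) (G : LoopGraph VG) (η : VT → Set VG) : Prop :=
  (∀ t, (η t).Nonempty) ∧
    ∀ ⦃s t⦄, T.Adj s t → ∀ x ∈ η s, ∀ y ∈ η t, G.Adj x y

/-- Canonical representative for the cylinder quotient relation. -/
def cylCanon {VA VB VC : Type} (f : VA → VB) (g : VA → VC) (n : ℕ) :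
    (VB ⊕ (VA × Fin (n + 1)) ⊕ VC) → (VB ⊕ (VA × Fin (n + 1)) ⊕ VC)
  | Sum.inr (Sum.inl (a, i)) =>
      if i = Fin.last n then Sum.inl (f a)
      else if i = 0 then Sum.inr (Sum.inr (g a))
      else Sum.inr (Sum.inl (a, i))
  | x => x

theorem cylCanon_rel {VA VB VC : Type} (f : VA → VB) (g : VA → VC) (n : ℕ)
    (hn : 1 ≤ n) {x y} (h : cylRel f g n x y) :
    cylCanon f g n x = cylCanon f g n y := by
  rcases h with ⟨a, rfl, rfl⟩ | ⟨a, rfl, rfl⟩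
  · simp [cylCanon]
  · have h0 : (0 : Fin (n+1)) ≠ Fin.last n := by
      intro h; have := congrArg Fin.val h; simp [Fin.last] at this; omega
    simp [cylCanon, h0]

theorem cylCanon_eqvGen {VA VB VC : Type} (f : VA → VB) (g : VA → VC) (n : ℕ)
    (hn : 1 ≤ n) {x y} (h : Relation.EqvGen (cylRel f g n) x y) :
    cylCanon f g n x = cylCanon f g n y := by
  induction h with
  | rel _ _ h => exact cylCanon_rel f g n hn h
  | refl => rfl
  | symm _ _ _ ih => exact ih.symm
  | trans _ _ _ _ _ ih1 ih2 => exact ih1.trans ih2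

/-- Let `T` have no isolated vertices and let `η` be a cell of
`Hom(T, D_n)`.  Writing `X = V(B) − f(V(A))`, `Y = f(V(A))` (identified with
`V(A) × {n}`) and `Z = V(A) × {n−1}`: if `η t` meets `X ∪ Y` for every vertex `t` of
`T`, then `Im η ⊆ X ∪ Y ∪ Z`, i.e. `Im η ⊆ V(B) ∪ (V(A) × {n−1})`. -/
theorem cell_image_in_top_collar {VT VA VB VC : Type}
    [Fintype VT] [Fintype VA] [Fintype VB] [Fintype VC]
    (T : LoopGraph VT) (A : LoopGraph VA) (B : LoopGraph VB) (C : LoopGraph VC)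
    (f : GHom A B) (g : GHom A C) (n : ℕ) (hn : 1 ≤ n)
    (hT : ∀ t, ∃ s, T.Adj t s)
    (η : VT → Set (CylVert f.toFun g.toFun n))
    (hη : IsMultiHom T (cylGraph A B C f.toFun g.toFun n) η)
    (X : Set (CylVert f.toFun g.toFun n))
    (hX : X = {x | ∃ b, b ∉ Set.range f.toFun ∧ x = Quot.mk _ (Sum.inl b)})
    (Y : Set (CylVert f.toFun g.toFun n))
    (hY : Y = {x | ∃ a, x = Quot.mk _ (Sum.inl (f.toFun a))})
    (Z : Set (CylVert f.toFun g.toFun n))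
    (hZ : Z = {x | ∃ a, x = Quot.mk _ (Sum.inr (Sum.inl (a, ⟨n - 1, by omega⟩)))})
    (hmeets : ∀ t, (η t ∩ (X ∪ Y)).Nonempty) :
    ∀ t, η t ⊆ X ∪ Y ∪ Z := by
  intro t v hv
  obtain ⟨s, hts⟩ := hT t
  obtain ⟨w, hws, hwXY⟩ := hmeets s
  have hadj := hη.2 hts v hv w hws
  obtain ⟨x₀, y₀, hx₀, hy₀, hbase⟩ := hadj
  -- w is a B-vertex
  have hwB : ∃ b : VB, w = Quot.mk _ (Sum.inl b) := by
    rcases hwXY with h | h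
    · rw [hX] at h; obtain ⟨b, _, hb⟩ := h; exact ⟨b, hb⟩
    · rw [hY] at h; obtain ⟨a, ha⟩ := h; exact ⟨_, ha⟩
  obtain ⟨b, rfl⟩ := hwB
  have hcanon : cylCanon f.toFun g.toFun n y₀ = Sum.inl b :=
    cylCanon_eqvGen f.toFun g.toFun n hn (Quot.eq.mp hy₀)
  -- analyse y₀
  rcases y₀ with b' | ⟨⟨a, i⟩ | c⟩
  · -- y₀ = inl b'
    rcases x₀ with b'' | p'' | c'' <;> simp only [cylBaseAdj] at hbase
    · subst hx₀
      by_cases hb'' : b'' ∈ Set.range f.toFun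
      · obtain ⟨a, rfl⟩ := hb''
        left; right; rw [hY]; exact ⟨a, rfl⟩
      · left; left; rw [hX]; exact ⟨b'', hb'', rfl⟩
  · -- y₀ = inr (inl (a, i)); canonical form forces i = last n
    have hi : i = Fin.last n := by
      by_contra hi
      simp only [cylCanon, hi, if_false] at hcanon
      split at hcanon <;> simp at hcanon
    subst hi
    rcases x₀ with b'' | ⟨⟨a', j⟩⟩ | c'' <;> simp only [cylBaseAdj] at hbase
    obtain ⟨hA, hj⟩ := hbase
    have hjv : (j : ℕ) ≤ n := Nat.lt_succ_iff.mp j.isLt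
    have hjn : (j : ℕ) = n ∨ (j : ℕ) = n - 1 := by
      have := j.isLt
      simp only [Fin.val_last] at hj
      rw [abs_le] at hj
      omega
    rcases hjn with hjn | hjn
    · -- j = n : top level, identified with f a'
      have hj' : j = Fin.last n := by
        apply Fin.ext; simpa [Fin.val_last] using hjn
      subst hj'
      have : Quot.mk (cylRel f.toFun g.toFun n) (Sum.inl (f.toFun a'))
          = Quot.mk _ (Sum.inr (Sum.inl (a', Fin.last n))) :=
        Quot.sound (Or.inl ⟨a', rfl, rfl⟩)
      left; right; rw [hY]
      exact ⟨a', by rw [← hx₀, this]⟩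
    · -- j = n - 1 : in Z
      have hj' : j = (⟨n - 1, by omega⟩ : Fin (n+1)) := Fin.ext hjn
      rw [hj'] at hx₀
      right; rw [hZ]
      exact ⟨a', hx₀.symm⟩
  · -- y₀ in C : impossible, canonical form is not inl
    simp [cylCanon] at hcanon
end

section
/- Let T be a finite connected graph such that the path P_4 on four vertices (three edges) is not an induced subgraph of T, and let D_n be a double mapping cylinder with n ≥ diam(T) + 1. Then every maximal cell η of Hom(T, D_n) has a pure face, i.e., a nonempty face contained in one of the subcomplexes Hom(T, B), Hom(T, A × I_n), or Hom(T, C). -/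
/-- A simple graph, viewed as a `Graph`. -/
def ofSimple {V : Type} (G : SimpleGraph V) : LoopGraph V := ⟨G.Adj, fun h => G.adj_symm h⟩

/- ===== helpers ===== -/
section Helpers
variable {VA VB VC : Type} {A : LoopGraph VA} {B : LoopGraph VB} {C : LoopGraph VC}
  (f : VA → VB) (g : VA → VC) (n : ℕ)

def cnorm : (VB ⊕ (VA × Fin (n + 1)) ⊕ VC) → (VB ⊕ (VA × Fin (n + 1)) ⊕ VC)
  | Sum.inl b => Sum.inl b
  | Sum.inr (Sum.inl (a, i)) =>
      if i = Fin.last n then Sum.inl (f a)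
      else if i = 0 then Sum.inr (Sum.inr (g a))
      else Sum.inr (Sum.inl (a, i))
  | Sum.inr (Sum.inr c) => Sum.inr (Sum.inr c)

variable {f g n}

lemma mkq_cnorm (x) : Quot.mk (cylRel f g n) (cnorm f g n x) = Quot.mk _ x := by
  rcases x with b | ⟨a, i⟩ | c
  · rfl
  · simp only [cnorm]
    split_ifs with h1 h2
    · subst h1; exact Quot.sound (Or.inl ⟨a, rfl, rfl⟩)
    · subst h2; exact Quot.sound (Or.inr ⟨a, rfl, rfl⟩)
    · rfl
  · rfl

lemma cnorm_rel (hn : 1 ≤ n) {x y} (h : cylRel f g n x y) :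
    cnorm f g n x = cnorm f g n y := by
  have hl0 : Fin.last n ≠ (0 : Fin (n+1)) := by
    intro h; have := congrArg Fin.val h; simp [Fin.val_last] at this; omega
  rcases h with ⟨a, rfl, rfl⟩ | ⟨a, rfl, rfl⟩ <;> simp [cnorm, hl0, hl0.symm]

lemma mkq_eq_iff (hn : 1 ≤ n) {x y} :
    Quot.mk (cylRel f g n) x = Quot.mk _ y ↔ cnorm f g n x = cnorm f g n y := by
  constructor
  · intro h
    exact congrArg (Quot.lift (cnorm f g n) (fun a b hab => cnorm_rel hn hab)) h
  · intro h
    rw [← mkq_cnorm (x := x), ← mkq_cnorm (x := y), h]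

lemma cylAdj_iff {x y : CylVert f g n} :
    (cylGraph A B C f g n).Adj x y ↔
      ∃ x₀ y₀, Quot.mk _ x₀ = x ∧ Quot.mk _ y₀ = y ∧ cylBaseAdj A B C n x₀ y₀ :=
  Iff.rfl

end Helpers

section AdjLemmas
variable {VA VB VC : Type} {A : LoopGraph VA} {B : LoopGraph VB} {C : LoopGraph VC}
  {f : VA → VB} {g : VA → VC} {n : ℕ}

lemma fin_ne_last_of_val {j : Fin (n+1)} (h : j.val ≠ n) : j ≠ Fin.last n := by
  intro he; apply h; rw [he, Fin.val_last]

lemma fin_ne_zero_of_val {j : Fin (n+1)} (h : j.val ≠ 0) : j ≠ 0 := by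
  intro he; apply h; rw [he]; rfl

lemma mkq_last (a : VA) :
    Quot.mk (cylRel f g n) (Sum.inr (Sum.inl (a, Fin.last n))) = Quot.mk _ (Sum.inl (f a)) :=
  (Quot.sound (show cylRel f g n _ _ from Or.inl ⟨a, rfl, rfl⟩)).symm

lemma mkq_zero (a : VA) :
    Quot.mk (cylRel f g n) (Sum.inr (Sum.inl (a, 0))) = Quot.mk _ (Sum.inr (Sum.inr (g a))) :=
  (Quot.sound (show cylRel f g n _ _ from Or.inr ⟨a, rfl, rfl⟩)).symm

/-- adjacency to a pure-B vertex forces a B-representative -/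
lemma adj_pureB (hn : 1 ≤ n) {v : CylVert f g n} {b : VB} (hb : ∀ a, f a ≠ b)
    (h : (cylGraph A B C f g n).Adj v (Quot.mk _ (Sum.inl b))) :
    ∃ b', Quot.mk _ (Sum.inl b') = v := by
  obtain ⟨x₀, y₀, hx, hy, hbase⟩ := cylAdj_iff.1 h
  rw [mkq_eq_iff hn] at hy
  rcases y₀ with b'' | ⟨a, i⟩ | c
  · simp only [cnorm, Sum.inl.injEq] at hy
    subst hy
    rcases x₀ with b' | p | c' <;> simp only [cylBaseAdj] at hbase
    exact ⟨b', hx⟩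
  · simp only [cnorm] at hy
    split_ifs at hy <;> simp_all
  · simp [cnorm] at hy

/-- adjacency to a pure-C vertex forces a C-representative -/
lemma adj_pureC (hn : 1 ≤ n) {v : CylVert f g n} {c : VC} (hc : ∀ a, g a ≠ c)
    (h : (cylGraph A B C f g n).Adj v (Quot.mk _ (Sum.inr (Sum.inr c)))) :
    ∃ c', Quot.mk _ (Sum.inr (Sum.inr c')) = v := by
  obtain ⟨x₀, y₀, hx, hy, hbase⟩ := cylAdj_iff.1 h
  rw [mkq_eq_iff hn] at hy
  rcases y₀ with b'' | ⟨a, i⟩ | c''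
  · simp [cnorm] at hy
  · simp only [cnorm] at hy
    split_ifs at hy <;> simp_all
  · simp only [cnorm, Sum.inr.injEq, Sum.inr.injEq] at hy
    subst hy
    rcases x₀ with b' | p | c' <;> simp only [cylBaseAdj] at hbase
    exact ⟨c', hx⟩

/-- adjacency to an interior cylinder vertex -/
lemma adj_interior (hn : 1 ≤ n) {v : CylVert f g n} {a : VA} {j : Fin (n+1)}
    (hj0 : j ≠ 0) (hjl : j ≠ Fin.last n)
    (h : (cylGraph A B C f g n).Adj v (Quot.mk _ (Sum.inr (Sum.inl (a, j))))) :
    ∃ a' j', Quot.mk _ (Sum.inr (Sum.inl (a', j'))) = v ∧ A.Adj a' a ∧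
      |(j' : ℤ) - (j : ℤ)| ≤ 1 := by
  obtain ⟨x₀, y₀, hx, hy, hbase⟩ := cylAdj_iff.1 h
  rw [mkq_eq_iff hn] at hy
  have hnj : cnorm f g n (Sum.inr (Sum.inl (a, j))) = Sum.inr (Sum.inl (a, j)) := by
    simp [cnorm, hj0, hjl]
  rw [hnj] at hy
  rcases y₀ with b'' | ⟨a₂, i₂⟩ | c''
  · simp [cnorm] at hy
  · simp only [cnorm] at hy
    split_ifs at hy <;> simp_all
    obtain ⟨rfl, rfl⟩ := hy
    rcases x₀ with b' | ⟨a', j'⟩ | c' <;> simp only [cylBaseAdj] at hbase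
    exact ⟨a', j', hx, hbase.1, hbase.2⟩
  · simp [cnorm] at hy

/-- adjacency to any B-class vertex -/
lemma adj_B (hn : 1 ≤ n) {v : CylVert f g n} {b : VB}
    (h : (cylGraph A B C f g n).Adj v (Quot.mk _ (Sum.inl b))) :
    (∃ b', Quot.mk _ (Sum.inl b') = v) ∨
    (∃ a', ∃ j' : Fin (n+1), Quot.mk _ (Sum.inr (Sum.inl (a', j'))) = v ∧
      (n : ℤ) - 1 ≤ (j' : ℤ)) := by
  obtain ⟨x₀, y₀, hx, hy, hbase⟩ := cylAdj_iff.1 h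
  rw [mkq_eq_iff hn] at hy
  rcases y₀ with b'' | ⟨a, i⟩ | c
  · simp only [cnorm, Sum.inl.injEq] at hy
    subst hy
    rcases x₀ with b' | p | c' <;> simp only [cylBaseAdj] at hbase
    exact Or.inl ⟨b', hx⟩
  · simp only [cnorm] at hy
    split_ifs at hy with h1 h2 <;> simp_all
    subst h1
    rcases x₀ with b' | ⟨a', j'⟩ | c' <;> simp only [cylBaseAdj] at hbase
    refine Or.inr ⟨a', j', hx, ?_⟩
    have h2 := hbase.2
    simp only [Fin.val_last] at h2 ⊢
    have := j'.isLt
    rw [abs_le] at h2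
    omega
  · simp [cnorm] at hy

/-- adjacency to any C-class vertex -/
lemma adj_C (hn : 1 ≤ n) {v : CylVert f g n} {c : VC}
    (h : (cylGraph A B C f g n).Adj v (Quot.mk _ (Sum.inr (Sum.inr c)))) :
    (∃ c', Quot.mk _ (Sum.inr (Sum.inr c')) = v) ∨
    (∃ a', ∃ j' : Fin (n+1), Quot.mk _ (Sum.inr (Sum.inl (a', j'))) = v ∧
      (j' : ℤ) ≤ 1) := by
  obtain ⟨x₀, y₀, hx, hy, hbase⟩ := cylAdj_iff.1 h
  rw [mkq_eq_iff hn] at hy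
  rcases y₀ with b'' | ⟨a, i⟩ | c''
  · simp [cnorm] at hy
  · simp only [cnorm] at hy
    split_ifs at hy with h1 h2 <;> simp_all
    subst h2
    rcases x₀ with b' | ⟨a', j'⟩ | c' <;> simp only [cylBaseAdj] at hbase
    refine Or.inr ⟨a', j', hx, ?_⟩
    have h2 := hbase.2
    rw [abs_le] at h2
    simp only [Fin.val_zero] at h2
    omega
  · simp only [cnorm, Sum.inr.injEq] at hy
    subst hy
    rcases x₀ with b' | p | c' <;> simp only [cylBaseAdj] at hbase
    exact Or.inl ⟨c', hx⟩

end AdjLemmas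


section Clash
variable {VA VB VC : Type} {f : VA → VB} {g : VA → VC} {n : ℕ}

lemma mk_inl_ne_cyl (hn : 1 ≤ n) {a : VA} {j : Fin (n+1)} (hjn : j.val ≠ n) (b : VB) :
    Quot.mk (cylRel f g n) (Sum.inl b) ≠ Quot.mk _ (Sum.inr (Sum.inl (a, j))) := by
  intro h
  rw [mkq_eq_iff hn] at h
  simp only [cnorm] at h
  by_cases h1 : j = Fin.last n
  · exact hjn (by rw [h1, Fin.val_last])
  · rw [if_neg h1] at h
    by_cases h2 : j = 0
    · rw [if_pos h2] at h; simp at h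
    · rw [if_neg h2] at h; simp at h

lemma mk_C_ne_cyl (hn : 1 ≤ n) {a : VA} {j : Fin (n+1)} (hj0 : j.val ≠ 0) (c : VC) :
    Quot.mk (cylRel f g n) (Sum.inr (Sum.inr c)) ≠ Quot.mk _ (Sum.inr (Sum.inl (a, j))) := by
  intro h
  rw [mkq_eq_iff hn] at h
  simp only [cnorm] at h
  by_cases h1 : j = Fin.last n
  · rw [if_pos h1] at h; simp at h
  · by_cases h2 : j = 0
    · exact hj0 (by rw [h2, Fin.val_zero])
    · rw [if_neg h1, if_neg h2] at h; simp at h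

lemma mk_icyl_ne_cyl (hn : 1 ≤ n) {a a' : VA} {j j' : Fin (n+1)}
    (hj0 : j.val ≠ 0) (hjn : j.val ≠ n) (hne : j'.val ≠ j.val) :
    Quot.mk (cylRel f g n) (Sum.inr (Sum.inl (a, j))) ≠
      Quot.mk _ (Sum.inr (Sum.inl (a', j'))) := by
  intro hh
  rw [mkq_eq_iff hn] at hh
  have hj1 : j ≠ Fin.last n := fin_ne_last_of_val hjn
  have hj2 : j ≠ 0 := fin_ne_zero_of_val hj0
  simp only [cnorm, if_neg hj1, if_neg hj2] at hh
  by_cases h1 : j' = Fin.last n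
  · rw [if_pos h1] at hh; simp at hh
  · by_cases h2 : j' = 0
    · rw [if_neg h1, if_pos h2] at hh; simp at hh
    · rw [if_neg h1, if_neg h2] at hh
      simp only [Sum.inr.injEq, Sum.inl.injEq, Prod.mk.injEq] at hh
      exact hne (congrArg Fin.val hh.2.symm)

end Clash

lemma dist2' {VT : Type} {T : SimpleGraph VT}
    (hP4 : ¬ ∃ e : Fin 4 ↪ VT, ∀ i j, T.Adj (e i) (e j) ↔ (SimpleGraph.pathGraph 4).Adj i j)
    {s t : VT} (w : T.Walk s t) :
    s = t ∨ T.Adj s t ∨ ∃ u, T.Adj s u ∧ T.Adj u t := by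
  induction w with
  | nil => exact Or.inl rfl
  | @cons s a t h p ih =>
    by_cases hst : s = t
    · exact Or.inl hst
    by_cases hadj : T.Adj s t
    · exact Or.inr (Or.inl hadj)
    rcases ih with rfl | hat | ⟨u, hau, hut⟩
    · exact absurd h hadj
    · exact Or.inr (Or.inr ⟨a, h, hat⟩)
    · by_cases hsu : T.Adj s u
      · exact Or.inr (Or.inr ⟨u, hsu, hut⟩)
      by_cases hsu' : s = u
      · exact absurd (hsu' ▸ hut) hadj
      by_cases hat' : T.Adj a t
      · exact Or.inr (Or.inr ⟨a, h, hat'⟩)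
      by_cases haeqt : a = t
      · exact absurd (haeqt ▸ h) hadj
      -- induced P4 on s, a, u, t
      exfalso
      apply hP4
      have hsa : s ≠ a := h.ne
      have hau' : a ≠ u := hau.ne
      have hut' : u ≠ t := hut.ne
      refine ⟨⟨![s, a, u, t], ?_⟩, ?_⟩
      · intro i j hij
        fin_cases i <;> fin_cases j <;> simp_all <;>
          first
            | rfl
            | (exact absurd hij hsa)
            | (exact absurd hij.symm hsa)
            | (exact absurd hij hsu')
            | (exact absurd hij.symm hsu')
            | (exact absurd hij hst)
            | (exact absurd hij.symm hst)
            | (exact absurd hij hau')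
            | (exact absurd hij.symm hau')
            | (exact absurd hij haeqt)
            | (exact absurd hij.symm haeqt)
            | (exact absurd hij hut')
            | (exact absurd hij.symm hut')
      · intro i j
        change T.Adj (![s, a, u, t] i) (![s, a, u, t] j) ↔ _
        have h1 : ¬ T.Adj u s := fun hh => hsu hh.symm
        have h2 : ¬ T.Adj t s := fun hh => hadj hh.symm
        have h3 : ¬ T.Adj t a := fun hh => hat' hh.symm
        fin_cases i <;> fin_cases j <;>
          simp [SimpleGraph.pathGraph_adj, h, h.symm, hau, hau.symm, hut, hut.symm,
            hsu, hadj, hat', h1, h2, h3, T.irrefl, Function.Embedding.coeFn_mk] <;> decide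


section MainProof
variable {VT VA VB VC : Type} {A : LoopGraph VA} {B : LoopGraph VB} {C : LoopGraph VC}
  {f : VA → VB} {g : VA → VC} {n : ℕ}

/-- Closure property of maximal cells. -/
lemma maximal_closure {T : SimpleGraph VT}
    {η : VT → Set (CylVert f g n)}
    (hη : IsMultiHom (ofSimple T) (cylGraph A B C f g n) η)
    (hmax : ∀ η', IsMultiHom (ofSimple T) (cylGraph A B C f g n) η' →
      (∀ t, η t ⊆ η' t) → η' = η)
    (t : VT) (x : CylVert f g n)
    (hx : ∀ s, T.Adj s t → ∀ w ∈ η s, (cylGraph A B C f g n).Adj w x) :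
    x ∈ η t := by
  classical
  set η' : VT → Set (CylVert f g n) :=
    fun u => η u ∪ (if u = t then {x} else ∅) with hη'def
  have hmh : IsMultiHom (ofSimple T) (cylGraph A B C f g n) η' := by
    constructor
    · exact fun u => (hη.1 u).mono Set.subset_union_left
    · intro s u hsu y hy z hz
      have hmem : ∀ v w, w ∈ η' v → w ∈ η v ∨ (v = t ∧ w = x) := by
        intro v w hw
        rcases hw with hw | hw
        · exact Or.inl hw
        · by_cases hv : v = t
          · rw [if_pos hv] at hw; exact Or.inr ⟨hv, hw⟩
          · rw [if_neg hv] at hw; exact absurd hw (Set.notMem_empty w)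
      rcases hmem s y hy with hy' | ⟨rfl, rfl⟩ <;> rcases hmem u z hz with hz' | ⟨rfl, rfl⟩
      · exact hη.2 hsu y hy' z hz'
      · exact hx s hsu y hy'
      · exact (cylGraph A B C f g n).symm (hx u (T.adj_symm hsu) z hz')
      · exact absurd hsu (T.irrefl)
  have heq := hmax η' hmh (fun u => Set.subset_union_left)
  have hx' : x ∈ η' t := Set.mem_union_right _ (by simp)
  rw [heq] at hx'
  exact hx'

end MainProof

/-- Let `T` be a finite connected graph with no induced `P₄` and let
`D_n` be a double mapping cylinder with `n ≥ diam(T) + 1`.  Then every maximal cell `η`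
of `Hom(T, D_n)` has a pure face: a cell `η' ≤ η` whose image lies entirely in `V(B)`,
in `V(A × I_n)`, or in `V(C)` (under the cylinder identifications). -/
theorem maximal_cell_has_pure_face {VT VA VB VC : Type}
    [Fintype VT] [Fintype VA] [Fintype VB] [Fintype VC]
    (T : SimpleGraph VT) (hTconn : T.Connected)
    (hP4 : ¬ ∃ e : Fin 4 ↪ VT, ∀ i j, T.Adj (e i) (e j) ↔ (SimpleGraph.pathGraph 4).Adj i j)
    (A : LoopGraph VA) (B : LoopGraph VB) (C : LoopGraph VC)
    (f : GHom A B) (g : GHom A C) (n : ℕ) (hn : T.diam + 1 ≤ n)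
    (η : VT → Set (CylVert f.toFun g.toFun n))
    (hη : IsMultiHom (ofSimple T) (cylGraph A B C f.toFun g.toFun n) η)
    (hmax : ∀ η', IsMultiHom (ofSimple T) (cylGraph A B C f.toFun g.toFun n) η' →
      (∀ t, η t ⊆ η' t) → η' = η) :
    ∃ η', IsMultiHom (ofSimple T) (cylGraph A B C f.toFun g.toFun n) η' ∧
      (∀ t, η' t ⊆ η t) ∧
      ((∀ t, η' t ⊆ Set.range fun b => Quot.mk _ (Sum.inl b)) ∨
       (∀ t, η' t ⊆ Set.range fun p : VA × Fin (n + 1) =>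
          Quot.mk _ (Sum.inr (Sum.inl p))) ∨
       (∀ t, η' t ⊆ Set.range fun c => Quot.mk _ (Sum.inr (Sum.inr c)))) := by
  classical
  have hn1 : 1 ≤ n := le_trans (by omega) hn
  suffices hsuf :
      (∀ t, ∃ x ∈ η t, ∃ b, (Quot.mk (cylRel f.toFun g.toFun n) : _ → CylVert f.toFun g.toFun n) (Sum.inl b) = x) ∨
      (∀ t, ∃ x ∈ η t, ∃ p, (Quot.mk (cylRel f.toFun g.toFun n) : _ → CylVert f.toFun g.toFun n) (Sum.inr (Sum.inl p)) = x) ∨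
      (∀ t, ∃ x ∈ η t, ∃ c, (Quot.mk (cylRel f.toFun g.toFun n) : _ → CylVert f.toFun g.toFun n) (Sum.inr (Sum.inr c)) = x) by
    have hsub : ∀ (P : CylVert f.toFun g.toFun n → Prop),
        (∀ t, ∃ x ∈ η t, P x) →
        IsMultiHom (ofSimple T) (cylGraph A B C f.toFun g.toFun n) (fun t => {x ∈ η t | P x}) ∧
        (∀ t, {x ∈ η t | P x} ⊆ η t) := by
      intro P hP
      exact ⟨⟨fun t => by obtain ⟨x, hx, hPx⟩ := hP t; exact ⟨x, hx, hPx⟩,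
        fun s t hst x hx y hy => hη.2 hst x hx.1 y hy.1⟩, fun t x hx => hx.1⟩
    rcases hsuf with h | h | h
    · obtain ⟨hmh, hss⟩ := hsub _ h
      exact ⟨_, hmh, hss, Or.inl (fun t x hx => hx.2)⟩
    · obtain ⟨hmh, hss⟩ := hsub _ h
      exact ⟨_, hmh, hss, Or.inr (Or.inl (fun t x hx => hx.2))⟩
    · obtain ⟨hmh, hss⟩ := hsub _ h
      exact ⟨_, hmh, hss, Or.inr (Or.inr (fun t x hx => hx.2))⟩
  by_cases hsing : ∀ u v : VT, u = v
  · have t₀ : VT := hTconn.nonempty.some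
    obtain ⟨x, hx⟩ := hη.1 t₀
    obtain ⟨x₀, hx₀⟩ := Quot.exists_rep x
    rcases x₀ with b | p | c
    · exact Or.inl (fun t => ⟨x, by rw [hsing t t₀]; exact hx, b, hx₀⟩)
    · exact Or.inr (Or.inl (fun t => ⟨x, by rw [hsing t t₀]; exact hx, p, hx₀⟩))
    · exact Or.inr (Or.inr (fun t => ⟨x, by rw [hsing t t₀]; exact hx, c, hx₀⟩))
  push_neg at hsing
  obtain ⟨u₀, v₀, huv⟩ := hsing
  have hNe : Nonempty VT := hTconn.nonempty
  have hn2 : 2 ≤ n := by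
    rcases Nat.lt_or_ge T.diam 1 with hd | hd
    · exfalso
      have hd0 : T.diam = 0 := by omega
      rw [SimpleGraph.diam_eq_zero] at hd0
      rcases hd0 with hd0 | hd0
      · obtain ⟨x, y, hxy⟩ := SimpleGraph.exists_edist_eq_ediam_of_finite (G := T)
        rw [hd0] at hxy
        exact (SimpleGraph.edist_ne_top_iff_reachable.2 (hTconn.preconnected x y)) hxy
      · exact huv (@Subsingleton.elim _ hd0 u₀ v₀)
    · omega
  have hdist2 : ∀ s t : VT, s = t ∨ T.Adj s t ∨ ∃ u, T.Adj s u ∧ T.Adj u t := by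
    intro s t
    exact (hTconn.preconnected s t).elim (fun w => dist2' hP4 w)
  have hasNbr : ∀ t : VT, ∃ s, T.Adj s t := by
    intro t
    have hex : ∃ w, w ≠ t := by
      by_cases h : u₀ = t
      · exact ⟨v₀, by rw [← h]; exact fun hh => huv hh.symm⟩
      · exact ⟨u₀, h⟩
    obtain ⟨w, hw⟩ := hex
    rcases hdist2 w t with rfl | h | ⟨u, _, hu⟩
    · exact absurd rfl hw
    · exact ⟨w, h⟩
    · exact ⟨u, hu⟩
  by_contra hcon
  have hsplit := not_or.1 hcon
  have hsplit2 := not_or.1 hsplit.2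
  obtain ⟨tB, htB0⟩ := not_forall.1 hsplit.1
  obtain ⟨tM, htM0⟩ := not_forall.1 hsplit2.1
  obtain ⟨tC, htC0⟩ := not_forall.1 hsplit2.2
  have htB : ∀ x ∈ η tB,
      ¬ ∃ b, (Quot.mk (cylRel f.toFun g.toFun n) : _ → CylVert f.toFun g.toFun n) (Sum.inl b) = x :=
    fun x hx hbx => htB0 ⟨x, hx, hbx⟩
  have htM : ∀ x ∈ η tM,
      ¬ ∃ p, (Quot.mk (cylRel f.toFun g.toFun n) : _ → CylVert f.toFun g.toFun n) (Sum.inr (Sum.inl p)) = x :=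
    fun x hx hbx => htM0 ⟨x, hx, hbx⟩
  have htC : ∀ x ∈ η tC,
      ¬ ∃ c, (Quot.mk (cylRel f.toFun g.toFun n) : _ → CylVert f.toFun g.toFun n) (Sum.inr (Sum.inr c)) = x :=
    fun x hx hbx => htC0 ⟨x, hx, hbx⟩
  have htrich : ∀ x : CylVert f.toFun g.toFun n,
      (∃ b, (Quot.mk (cylRel f.toFun g.toFun n) : _ → CylVert f.toFun g.toFun n) (Sum.inl b) = x) ∨
      (∃ p, (Quot.mk (cylRel f.toFun g.toFun n) : _ → CylVert f.toFun g.toFun n) (Sum.inr (Sum.inl p)) = x) ∨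
      (∃ c, (Quot.mk (cylRel f.toFun g.toFun n) : _ → CylVert f.toFun g.toFun n) (Sum.inr (Sum.inr c)) = x) := by
    intro x
    obtain ⟨x₀, rfl⟩ := Quot.exists_rep x
    rcases x₀ with b | p | c
    · exact Or.inl ⟨b, rfl⟩
    · exact Or.inr (Or.inl ⟨p, rfl⟩)
    · exact Or.inr (Or.inr ⟨c, rfl⟩)
  have hclassM : ∀ x ∈ η tM,
      (∃ b, (Quot.mk (cylRel f.toFun g.toFun n) : _ → CylVert f.toFun g.toFun n) (Sum.inl b) = x ∧ ∀ a, f.toFun a ≠ b) ∨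
      (∃ c, (Quot.mk (cylRel f.toFun g.toFun n) : _ → CylVert f.toFun g.toFun n) (Sum.inr (Sum.inr c)) = x ∧
        ∀ a, g.toFun a ≠ c) := by
    intro x hx
    rcases htrich x with ⟨b, hb⟩ | ⟨p, hp⟩ | ⟨c, hc⟩
    · refine Or.inl ⟨b, hb, fun a hfa => ?_⟩
      exact htM x hx ⟨(a, Fin.last n), by rw [mkq_last, hfa, hb]⟩
    · exact absurd ⟨p, hp⟩ (htM x hx)
    · refine Or.inr ⟨c, hc, fun a hga => ?_⟩
      exact htM x hx ⟨(a, 0), by rw [mkq_zero, hga, hc]⟩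
  obtain ⟨xM, hxM⟩ := hη.1 tM
  have hnomix : ∀ b c, (∀ a, f.toFun a ≠ b) → (∀ a, g.toFun a ≠ c) →
      ((Quot.mk (cylRel f.toFun g.toFun n) : _ → CylVert f.toFun g.toFun n) (Sum.inl b)) ∈ η tM →
      ((Quot.mk (cylRel f.toFun g.toFun n) : _ → CylVert f.toFun g.toFun n) (Sum.inr (Sum.inr c))) ∈ η tM → False := by
    intro b c hfb hgc hbm hcm
    obtain ⟨s₀, hs₀⟩ := hasNbr tM
    obtain ⟨w, hw⟩ := hη.1 s₀
    obtain ⟨b', hb'⟩ := adj_pureB (A := A) (B := B) (C := C) hn1 hfb (hη.2 hs₀ w hw _ hbm)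
    obtain ⟨c', hc'⟩ := adj_pureC (A := A) (B := B) (C := C) hn1 hgc (hη.2 hs₀ w hw _ hcm)
    have hbc : (Quot.mk (cylRel f.toFun g.toFun n) : _ → CylVert f.toFun g.toFun n) (Sum.inl b') =
        Quot.mk _ (Sum.inr (Sum.inr c')) := hb'.trans hc'.symm
    rw [mkq_eq_iff hn1] at hbc
    simp [cnorm] at hbc
  have hBorC :
      (∀ x ∈ η tM, ∃ b, (Quot.mk (cylRel f.toFun g.toFun n) : _ → CylVert f.toFun g.toFun n) (Sum.inl b) = x ∧
        ∀ a, f.toFun a ≠ b) ∨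
      (∀ x ∈ η tM, ∃ c, (Quot.mk (cylRel f.toFun g.toFun n) : _ → CylVert f.toFun g.toFun n) (Sum.inr (Sum.inr c)) = x ∧
        ∀ a, g.toFun a ≠ c) := by
    rcases hclassM xM hxM with ⟨b, hb, hfb⟩ | ⟨c, hc, hgc⟩
    · refine Or.inl (fun x hx => ?_)
      rcases hclassM x hx with h | ⟨c, hc, hgc⟩
      · exact h
      · exact (hnomix b c hfb hgc (by rw [hb]; exact hxM) (by rw [hc]; exact hx)).elim
    · refine Or.inr (fun x hx => ?_)
      rcases hclassM x hx with ⟨b, hb, hfb⟩ | h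
      · exact (hnomix b c hfb hgc (by rw [hb]; exact hx) (by rw [hc]; exact hxM)).elim
      · exact h
  rcases hBorC with hB | hC
  · -- η tM is pure-B
    have hNbrB : ∀ u, T.Adj u tM → ∀ w ∈ η u,
        ∃ b', (Quot.mk (cylRel f.toFun g.toFun n) : _ → CylVert f.toFun g.toFun n) (Sum.inl b') = w := by
      intro u hu w hw
      obtain ⟨b, hb, hfb⟩ := hB xM hxM
      refine adj_pureB (A := A) (B := B) (C := C) hn1 hfb ?_
      rw [hb]; exact hη.2 hu w hw xM hxM
    have hdichB : ∀ u, ∀ w ∈ η u,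
        (∃ b', (Quot.mk (cylRel f.toFun g.toFun n) : _ → CylVert f.toFun g.toFun n) (Sum.inl b') = w) ∨
        (∃ a'', ∃ j : Fin (n+1),
          (Quot.mk (cylRel f.toFun g.toFun n) : _ → CylVert f.toFun g.toFun n) (Sum.inr (Sum.inl (a'', j))) = w ∧
          j.val = n - 1) := by
      intro u w hw
      rcases hdist2 u tM with rfl | hu | ⟨u', h1, h2⟩
      · obtain ⟨b, hb, -⟩ := hB w hw; exact Or.inl ⟨b, hb⟩
      · exact Or.inl (hNbrB u hu w hw)
      · obtain ⟨y, hy⟩ := hη.1 u'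
        obtain ⟨b, hb⟩ := hNbrB u' h2 y hy
        have hadj : (cylGraph A B C f.toFun g.toFun n).Adj w
            (Quot.mk _ (Sum.inl b)) := by rw [hb]; exact hη.2 h1 w hw y hy
        rcases adj_B (A := A) (B := B) (C := C) hn1 hadj with h | ⟨a', j', hj, hjge⟩
        · exact Or.inl h
        · have hjge' : (n : ℤ) - 1 ≤ (j'.val : ℤ) := hjge
          have hjlt := j'.isLt
          by_cases hjn : j'.val = n
          · refine Or.inl ⟨f.toFun a', ?_⟩
            rw [← hj]
            have hjl : j' = Fin.last n := by
              rw [Fin.ext_iff, Fin.val_last]; exact hjn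
            rw [hjl, mkq_last]
          · exact Or.inr ⟨a', j', hj, by omega⟩
    obtain ⟨zB, hzB⟩ := hη.1 tB
    rcases hdichB tB zB hzB with ⟨b, hb⟩ | ⟨aB, jB, hzeq, hjval⟩
    · exact htB zB hzB ⟨b, hb⟩
    · have hkey : ∀ s, T.Adj s tB → ∀ w ∈ η s,
          (cylGraph A B C f.toFun g.toFun n).Adj w
            (Quot.mk _ (Sum.inr (Sum.inl (aB, Fin.last n)))) := by
        intro s hs w hw
        have hadjz : (cylGraph A B C f.toFun g.toFun n).Adj w
            (Quot.mk _ (Sum.inr (Sum.inl (aB, jB)))) := by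
          rw [hzeq]; exact hη.2 hs w hw zB hzB
        have hj0 : jB ≠ 0 := fin_ne_zero_of_val (by omega)
        have hjl : jB ≠ Fin.last n := fin_ne_last_of_val (by omega)
        obtain ⟨a', j', hw', haa, habs⟩ := adj_interior (A := A) (B := B) (C := C) hn1 hj0 hjl hadjz
        have habs' : -1 ≤ (j'.val : ℤ) - (jB.val : ℤ) ∧
            (j'.val : ℤ) - (jB.val : ℤ) ≤ 1 := abs_le.1 habs
        have hjlt := j'.isLt
        have hj'ge : n - 1 ≤ j'.val := by
          by_contra hlt
          push_neg at hlt
          rcases hdichB s w hw with ⟨b', hb'⟩ | ⟨a'', j'', hw'', hj''⟩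
          · exact mk_inl_ne_cyl hn1 (by omega) b' (hb'.trans hw'.symm)
          · exact mk_icyl_ne_cyl hn1 (by omega) (by omega) (by omega)
              (hw''.trans hw'.symm)
        rw [← hw']
        refine cylAdj_iff.2 ⟨_, _, rfl, rfl, ?_⟩
        show (A.prodIn n).Adj (a', j') (aB, Fin.last n)
        refine ⟨haa, ?_⟩
        have hc1 : ((j' : Fin (n+1)) : ℤ) = (j'.val : ℤ) := rfl
        have hc2 : ((Fin.last n : Fin (n+1)) : ℤ) = (n : ℤ) := by
          simp [Fin.val_last]
        rw [abs_le]
        constructor <;> simp only [hc1, hc2] <;> omega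
      have hxmem := maximal_closure hη hmax tB _ hkey
      exact htB _ hxmem ⟨f.toFun aB, (mkq_last aB).symm⟩
  · -- η tM is pure-C
    have hNbrC : ∀ u, T.Adj u tM → ∀ w ∈ η u,
        ∃ c', (Quot.mk (cylRel f.toFun g.toFun n) : _ → CylVert f.toFun g.toFun n) (Sum.inr (Sum.inr c')) = w := by
      intro u hu w hw
      obtain ⟨c, hc, hgc⟩ := hC xM hxM
      refine adj_pureC (A := A) (B := B) (C := C) hn1 hgc ?_
      rw [hc]; exact hη.2 hu w hw xM hxM
    have hdichC : ∀ u, ∀ w ∈ η u,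
        (∃ c', (Quot.mk (cylRel f.toFun g.toFun n) : _ → CylVert f.toFun g.toFun n) (Sum.inr (Sum.inr c')) = w) ∨
        (∃ a'', ∃ j : Fin (n+1),
          (Quot.mk (cylRel f.toFun g.toFun n) : _ → CylVert f.toFun g.toFun n) (Sum.inr (Sum.inl (a'', j))) = w ∧
          j.val = 1) := by
      intro u w hw
      rcases hdist2 u tM with rfl | hu | ⟨u', h1, h2⟩
      · obtain ⟨c, hc, -⟩ := hC w hw; exact Or.inl ⟨c, hc⟩
      · exact Or.inl (hNbrC u hu w hw)
      · obtain ⟨y, hy⟩ := hη.1 u'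
        obtain ⟨c, hc⟩ := hNbrC u' h2 y hy
        have hadj : (cylGraph A B C f.toFun g.toFun n).Adj w
            (Quot.mk _ (Sum.inr (Sum.inr c))) := by rw [hc]; exact hη.2 h1 w hw y hy
        rcases adj_C (A := A) (B := B) (C := C) hn1 hadj with h | ⟨a', j', hj, hjle⟩
        · exact Or.inl h
        · have hjle' : (j'.val : ℤ) ≤ 1 := hjle
          by_cases hjz : j'.val = 0
          · refine Or.inl ⟨g.toFun a', ?_⟩
            rw [← hj]
            have hjl : j' = 0 := by
              rw [Fin.ext_iff, Fin.val_zero]; exact hjz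
            rw [hjl, mkq_zero]
          · exact Or.inr ⟨a', j', hj, by omega⟩
    obtain ⟨zC, hzC⟩ := hη.1 tC
    rcases hdichC tC zC hzC with ⟨c, hc⟩ | ⟨aC, jC, hzeq, hjval⟩
    · exact htC zC hzC ⟨c, hc⟩
    · have hkey : ∀ s, T.Adj s tC → ∀ w ∈ η s,
          (cylGraph A B C f.toFun g.toFun n).Adj w
            (Quot.mk _ (Sum.inr (Sum.inl (aC, 0)))) := by
        intro s hs w hw
        have hadjz : (cylGraph A B C f.toFun g.toFun n).Adj w
            (Quot.mk _ (Sum.inr (Sum.inl (aC, jC)))) := by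
          rw [hzeq]; exact hη.2 hs w hw zC hzC
        have hj0 : jC ≠ 0 := fin_ne_zero_of_val (by omega)
        have hjl : jC ≠ Fin.last n := fin_ne_last_of_val (by omega)
        obtain ⟨a', j', hw', haa, habs⟩ := adj_interior (A := A) (B := B) (C := C) hn1 hj0 hjl hadjz
        have habs' : -1 ≤ (j'.val : ℤ) - (jC.val : ℤ) ∧
            (j'.val : ℤ) - (jC.val : ℤ) ≤ 1 := abs_le.1 habs
        have hjlt := j'.isLt
        have hj'le : j'.val ≤ 1 := by
          by_contra hgt
          push_neg at hgt
          rcases hdichC s w hw with ⟨c', hc'⟩ | ⟨a'', j'', hw'', hj''⟩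
          · exact mk_C_ne_cyl hn1 (by omega) c' (hc'.trans hw'.symm)
          · exact mk_icyl_ne_cyl hn1 (by omega) (by omega) (by omega)
              (hw''.trans hw'.symm)
        rw [← hw']
        refine cylAdj_iff.2 ⟨_, _, rfl, rfl, ?_⟩
        show (A.prodIn n).Adj (a', j') (aC, 0)
        refine ⟨haa, ?_⟩
        have hc1 : ((j' : Fin (n+1)) : ℤ) = (j'.val : ℤ) := rfl
        have hc2 : (((0 : Fin (n+1))) : ℤ) = (0 : ℤ) := by
          simp [Fin.val_zero]
        rw [abs_le]
        constructor <;> simp only [hc1, hc2] <;> omega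
      have hxmem := maximal_closure hη hmax tC _ hkey
      exact htC _ hxmem ⟨g.toFun aC, (mkq_zero aC).symm⟩
end
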